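/- Let m ≥ 1, let ω = exp(2πi/m), and let t₁, t₂, t₃ ∈ ℂ with |t₁|, |t₂|, |t₃| < 1. Then (1/m²)·∑_{i=0}^{m−1}∑_{j=0}^{m−1} [(1 − t₁·ω^i)(1 − t₂·ω^j)(1 − t₃·ω^{−i−j})]^{−1} = (1 − (t₁t₂t₃)^m) / [(1 − t₁t₂t₃)(1 − t₁^m)(1 − t₂^m)(1 − t₃^m)]. This is the refined (three-variable) Molien/Hilbert series of the orbifold ℂ³/(ℤ_m × ℤ_m). -/

import Mathlib

open scoped BigOperators

open Finset

private lemma molien_geom (m : ℕ) (t x : ℂ) (hx1 : x ≠ 1) (hxm : x ^ m = t ^ m)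
    (htm : (1 : ℂ) - t ^ m ≠ 0) :
    (1 - x)⁻¹ = (∑ a ∈ range m, x ^ a) * (1 - t ^ m)⁻¹ := by
  have h1x : (1 : ℂ) - x ≠ 0 := sub_ne_zero.mpr (Ne.symm hx1)
  have h : (1 - x) * ∑ a ∈ range m, x ^ a = 1 - t ^ m := by
    have := geom_sum_mul x m
    rw [← hxm]
    linear_combination -this
  field_simp
  linear_combination -h

private lemma molien_abs_lt (t u : ℂ) (ht : ‖t‖ < 1) (hu : ‖u‖ = 1) :
    t * u ≠ 1 := by
  intro h
  have : ‖t * u‖ = ‖t‖ := by rw [norm_mul, hu, mul_one]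
  rw [h, norm_one] at this
  linarith

private lemma molien_pow_id (ζ t₁ t₂ t₃ : ℂ) (hζ0 : ζ ≠ 0) (i j a b c : ℕ) :
    (t₁ * ζ ^ i) ^ a * ((t₂ * ζ ^ j) ^ b * (t₃ * ζ ^ (-(i:ℤ) - j)) ^ c)
    = t₁ ^ a * t₂ ^ b * t₃ ^ c * (ζ ^ ((a:ℤ) - c)) ^ i * (ζ ^ ((b:ℤ) - c)) ^ j := by
  have key : ∀ (n : ℕ) (d : ℤ), (ζ ^ d) ^ n = ζ ^ (d * n) := fun n d => by
    rw [← zpow_natCast (ζ ^ d) n, ← zpow_mul]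
  have key2 : ∀ n : ℕ, ζ ^ n = ζ ^ ((n : ℤ)) := fun n => (zpow_natCast ζ n).symm
  rw [mul_pow, mul_pow, mul_pow, key, key, key2 i, key2 j, key, key, key]
  have hz : ζ ^ ((i:ℤ) * a) * ζ ^ ((j:ℤ) * b) * ζ ^ ((-(i:ℤ) - j) * c)
      = ζ ^ (((a:ℤ) - c) * i) * ζ ^ (((b:ℤ) - c) * j) := by
    rw [← zpow_add₀ hζ0, ← zpow_add₀ hζ0, ← zpow_add₀ hζ0]
    ring_nf
  linear_combination (t₁ ^ a * t₂ ^ b * t₃ ^ c) * hz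

private lemma molien_swap3 {M : Type*} [AddCommMonoid M] (s : Finset ℕ)
    (g : ℕ → ℕ → ℕ → ℕ → M) :
    ∑ i ∈ s, ∑ a ∈ s, ∑ b ∈ s, ∑ c ∈ s, g i a b c
      = ∑ a ∈ s, ∑ b ∈ s, ∑ c ∈ s, ∑ i ∈ s, g i a b c := by
  rw [Finset.sum_comm]
  refine Finset.sum_congr rfl fun a _ => ?_
  rw [Finset.sum_comm]
  refine Finset.sum_congr rfl fun b _ => ?_
  rw [Finset.sum_comm]

private lemma molien_orth (m : ℕ) (hm : m ≠ 0) (a c : ℕ) (ha : a < m) (hc : c < m) :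
    ∑ i ∈ range m, (Complex.exp (2 * Real.pi * Complex.I / m) ^ ((a:ℤ) - c)) ^ i
      = if a = c then (m : ℂ) else 0 := by
  set ζ := Complex.exp (2 * Real.pi * Complex.I / m) with hζ
  have hprim : IsPrimitiveRoot ζ m := Complex.isPrimitiveRoot_exp m hm
  by_cases h : a = c
  · simp [h]
  · rw [if_neg h]
    have hne : ζ ^ ((a:ℤ) - c) ≠ 1 := by
      rw [Ne, hprim.zpow_eq_one_iff_dvd]
      intro hdvd
      have : (a:ℤ) - c = 0 := by
        refine Int.eq_zero_of_abs_lt_dvd hdvd ?_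
        rw [abs_sub_lt_iff]
        constructor <;> [omega; omega]
      omega
    have hpow : (ζ ^ ((a:ℤ) - c)) ^ m = 1 := by
      rw [← zpow_natCast (ζ ^ ((a:ℤ) - c)) m, ← zpow_mul, mul_comm, zpow_mul, zpow_natCast,
        hprim.pow_eq_one, one_zpow]
    rw [geom_sum_eq hne, hpow, sub_self, zero_div]

/-- The refined (three-variable) Molien/Hilbert series of `ℂ³/(ℤ_m × ℤ_m)`:
for `ω = exp(2πi/m)` and `|t₁|, |t₂|, |t₃| < 1`,
`(1/m²) ∑_{i<m} ∑_{j<m} [(1 - t₁ω^i)(1 - t₂ω^j)(1 - t₃ω^{-i-j})]⁻¹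
  = (1 - (t₁t₂t₃)^m) / ((1 - t₁t₂t₃)(1 - t₁^m)(1 - t₂^m)(1 - t₃^m))`. -/
theorem refined_molien_Zm_Zm (m : ℕ) (hm : 1 ≤ m) (t₁ t₂ t₃ : ℂ)
    (h₁ : ‖t₁‖ < 1) (h₂ : ‖t₂‖ < 1) (h₃ : ‖t₃‖ < 1) :
    (1 / ((m : ℂ) ^ 2)) *
      ∑ i ∈ Finset.range m, ∑ j ∈ Finset.range m,
        ((1 - t₁ * Complex.exp (2 * Real.pi * Complex.I / m) ^ i) *
         (1 - t₂ * Complex.exp (2 * Real.pi * Complex.I / m) ^ j) *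
         (1 - t₃ * Complex.exp (2 * Real.pi * Complex.I / m) ^ (-(i : ℤ) - (j : ℤ))))⁻¹
    = (1 - (t₁ * t₂ * t₃) ^ m) /
        ((1 - t₁ * t₂ * t₃) * (1 - t₁ ^ m) * (1 - t₂ ^ m) * (1 - t₃ ^ m)) := by
  have hm0 : m ≠ 0 := by omega
  set ζ := Complex.exp (2 * Real.pi * Complex.I / m) with hζdef
  have hprim : IsPrimitiveRoot ζ m := Complex.isPrimitiveRoot_exp m hm0
  have hζ0 : ζ ≠ 0 := Complex.exp_ne_zero _
  have habsζ : ‖ζ‖ = 1 := by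
    have h1 : ‖ζ‖ ^ m = 1 := by
      rw [← norm_pow, hprim.pow_eq_one, norm_one]
    rcases lt_trichotomy (‖ζ‖) 1 with h | h | h
    · have := pow_lt_one₀ (norm_nonneg ζ) h hm0
      linarith
    · exact h
    · have := one_lt_pow₀ h hm0
      linarith
  -- nonvanishing of denominators
  have hpm : ∀ t : ℂ, ‖t‖ < 1 → (1 : ℂ) - t ^ m ≠ 0 := by
    intro t ht
    rw [sub_ne_zero]
    intro h
    have : ‖t ^ m‖ < 1 := by
      rw [norm_pow]; exact pow_lt_one₀ (norm_nonneg t) ht hm0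
    rw [← h, norm_one] at this
    linarith
  have hD1 : (1 : ℂ) - t₁ ^ m ≠ 0 := hpm t₁ h₁
  have hD2 : (1 : ℂ) - t₂ ^ m ≠ 0 := hpm t₂ h₂
  have hD3 : (1 : ℂ) - t₃ ^ m ≠ 0 := hpm t₃ h₃
  have habs123 : ‖t₁ * t₂ * t₃‖ < 1 := by
    rw [norm_mul, norm_mul]
    have n1 := norm_nonneg t₁
    have n2 := norm_nonneg t₂
    have n3 := norm_nonneg t₃
    have hab : ‖t₁‖ * ‖t₂‖ < 1 :=
      lt_of_le_of_lt (mul_le_of_le_one_right n1 h₂.le) h₁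
    have habc : ‖t₁‖ * ‖t₂‖ * ‖t₃‖ ≤
        ‖t₁‖ * ‖t₂‖ := mul_le_of_le_one_right (mul_nonneg n1 n2) h₃.le
    linarith
  have hT : (1 : ℂ) - t₁ * t₂ * t₃ ≠ 0 := by
    rw [sub_ne_zero]
    intro h
    rw [← h, norm_one] at habs123
    linarith
  -- step 1: rewrite each summand as a quintuple sum
  have hterm : ∀ i ∈ range m, ∀ j ∈ range m,
      ((1 - t₁ * ζ ^ i) * (1 - t₂ * ζ ^ j) * (1 - t₃ * ζ ^ (-(i:ℤ) - j)))⁻¹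
      = (∑ a ∈ range m, ∑ b ∈ range m, ∑ c ∈ range m,
          t₁ ^ a * t₂ ^ b * t₃ ^ c * (ζ ^ ((a:ℤ) - c)) ^ i * (ζ ^ ((b:ℤ) - c)) ^ j)
          * ((1 - t₁ ^ m)⁻¹ * (1 - t₂ ^ m)⁻¹ * (1 - t₃ ^ m)⁻¹) := by
    intro i _ j _
    have habsi : ‖ζ ^ i‖ = 1 := by rw [norm_pow, habsζ, one_pow]
    have habsj : ‖ζ ^ j‖ = 1 := by rw [norm_pow, habsζ, one_pow]
    have habse : ‖ζ ^ (-(i:ℤ) - j)‖ = 1 := by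
      rw [norm_zpow, habsζ, one_zpow]
    have hx1 : (t₁ * ζ ^ i) ^ m = t₁ ^ m := by
      rw [mul_pow, ← pow_mul, mul_comm i m, pow_mul, hprim.pow_eq_one, one_pow, mul_one]
    have hx2 : (t₂ * ζ ^ j) ^ m = t₂ ^ m := by
      rw [mul_pow, ← pow_mul, mul_comm j m, pow_mul, hprim.pow_eq_one, one_pow, mul_one]
    have he : (ζ ^ (-(i:ℤ) - j)) ^ m = 1 := by
      rw [← zpow_natCast (ζ ^ (-(i:ℤ) - j)) m, ← zpow_mul, mul_comm, zpow_mul,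
        zpow_natCast, hprim.pow_eq_one, one_zpow]
    have hx3 : (t₃ * ζ ^ (-(i:ℤ) - j)) ^ m = t₃ ^ m := by
      rw [mul_pow, he, mul_one]
    rw [mul_inv, mul_inv,
      molien_geom m t₁ (t₁ * ζ ^ i) (molien_abs_lt t₁ _ h₁ habsi) hx1 hD1,
      molien_geom m t₂ (t₂ * ζ ^ j) (molien_abs_lt t₂ _ h₂ habsj) hx2 hD2,
      molien_geom m t₃ (t₃ * ζ ^ (-(i:ℤ) - j)) (molien_abs_lt t₃ _ h₃ habse) hx3 hD3]
    have hS : (∑ a ∈ range m, (t₁ * ζ ^ i) ^ a) *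
        ((∑ b ∈ range m, (t₂ * ζ ^ j) ^ b) *
         (∑ c ∈ range m, (t₃ * ζ ^ (-(i:ℤ) - j)) ^ c))
        = ∑ a ∈ range m, ∑ b ∈ range m, ∑ c ∈ range m,
            t₁ ^ a * t₂ ^ b * t₃ ^ c * (ζ ^ ((a:ℤ) - c)) ^ i * (ζ ^ ((b:ℤ) - c)) ^ j := by
      rw [← mul_assoc, Finset.sum_mul_sum, Finset.sum_mul]
      refine Finset.sum_congr rfl fun a _ => ?_
      rw [Finset.sum_mul]
      refine Finset.sum_congr rfl fun b _ => ?_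
      rw [Finset.mul_sum]
      refine Finset.sum_congr rfl fun c _ => ?_
      rw [mul_assoc]
      exact molien_pow_id ζ t₁ t₂ t₃ hζ0 i j a b c
    rw [← hS]
    ring
  -- step 2: sum interchange and orthogonality
  have hswap : (∑ i ∈ range m, ∑ j ∈ range m, ∑ a ∈ range m, ∑ b ∈ range m, ∑ c ∈ range m,
        t₁ ^ a * t₂ ^ b * t₃ ^ c * (ζ ^ ((a:ℤ) - c)) ^ i * (ζ ^ ((b:ℤ) - c)) ^ j)
      = ∑ a ∈ range m, ∑ b ∈ range m, ∑ c ∈ range m, ∑ i ∈ range m, ∑ j ∈ range m,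
        t₁ ^ a * t₂ ^ b * t₃ ^ c * (ζ ^ ((a:ℤ) - c)) ^ i * (ζ ^ ((b:ℤ) - c)) ^ j := by
    calc (∑ i ∈ range m, ∑ j ∈ range m, ∑ a ∈ range m, ∑ b ∈ range m, ∑ c ∈ range m,
        t₁ ^ a * t₂ ^ b * t₃ ^ c * (ζ ^ ((a:ℤ) - c)) ^ i * (ζ ^ ((b:ℤ) - c)) ^ j)
        = ∑ i ∈ range m, ∑ a ∈ range m, ∑ b ∈ range m, ∑ c ∈ range m, ∑ j ∈ range m,
            t₁ ^ a * t₂ ^ b * t₃ ^ c * (ζ ^ ((a:ℤ) - c)) ^ i * (ζ ^ ((b:ℤ) - c)) ^ j :=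
          Finset.sum_congr rfl fun i _ => molien_swap3 (range m)
            (fun j a b c => t₁ ^ a * t₂ ^ b * t₃ ^ c * (ζ ^ ((a:ℤ) - c)) ^ i * (ζ ^ ((b:ℤ) - c)) ^ j)
      _ = _ := molien_swap3 (range m)
            (fun i a b c => ∑ j ∈ range m,
              t₁ ^ a * t₂ ^ b * t₃ ^ c * (ζ ^ ((a:ℤ) - c)) ^ i * (ζ ^ ((b:ℤ) - c)) ^ j)
  have hin : ∀ a b c : ℕ, a ∈ range m → c ∈ range m → b ∈ range m →
      (∑ i ∈ range m, ∑ j ∈ range m,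
        t₁ ^ a * t₂ ^ b * t₃ ^ c * (ζ ^ ((a:ℤ) - c)) ^ i * (ζ ^ ((b:ℤ) - c)) ^ j)
      = t₁ ^ a * t₂ ^ b * t₃ ^ c * (if a = c then (m:ℂ) else 0) * (if b = c then (m:ℂ) else 0) := by
    intro a b c ha hc hb
    have e : (∑ i ∈ range m, (t₁ ^ a * t₂ ^ b * t₃ ^ c * (ζ ^ ((a:ℤ) - c)) ^ i)) *
        (∑ j ∈ range m, (ζ ^ ((b:ℤ) - c)) ^ j)
        = ∑ i ∈ range m, ∑ j ∈ range m,
            t₁ ^ a * t₂ ^ b * t₃ ^ c * (ζ ^ ((a:ℤ) - c)) ^ i * (ζ ^ ((b:ℤ) - c)) ^ j :=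
      Finset.sum_mul_sum _ _ _ _
    rw [← e, ← Finset.mul_sum]
    have o1 : ∑ i ∈ range m, (ζ ^ ((a:ℤ) - c)) ^ i = if a = c then (m:ℂ) else 0 := by
      rw [hζdef]
      exact molien_orth m hm0 a c (mem_range.mp ha) (mem_range.mp hc)
    have o2 : ∑ j ∈ range m, (ζ ^ ((b:ℤ) - c)) ^ j = if b = c then (m:ℂ) else 0 := by
      rw [hζdef]
      exact molien_orth m hm0 b c (mem_range.mp hb) (mem_range.mp hc)
    rw [o1, o2]
  -- step 3: collapse the triple sum
  have hcol : (∑ a ∈ range m, ∑ b ∈ range m, ∑ c ∈ range m,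
        t₁ ^ a * t₂ ^ b * t₃ ^ c * (if a = c then (m:ℂ) else 0) * (if b = c then (m:ℂ) else 0))
      = (m:ℂ) ^ 2 * ∑ a ∈ range m, (t₁ * t₂ * t₃) ^ a := by
    rw [Finset.mul_sum]
    refine Finset.sum_congr rfl fun a ha => ?_
    have hc : ∀ b : ℕ, (∑ c ∈ range m,
        t₁ ^ a * t₂ ^ b * t₃ ^ c * (if a = c then (m:ℂ) else 0) * (if b = c then (m:ℂ) else 0))
        = t₁ ^ a * t₂ ^ b * t₃ ^ a * (m:ℂ) * (if b = a then (m:ℂ) else 0) := by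
      intro b
      rw [Finset.sum_eq_single_of_mem a ha (fun c _ hca => by simp [Ne.symm hca])]
      simp
    calc (∑ b ∈ range m, ∑ c ∈ range m,
          t₁ ^ a * t₂ ^ b * t₃ ^ c * (if a = c then (m:ℂ) else 0) * (if b = c then (m:ℂ) else 0))
        = ∑ b ∈ range m,
            t₁ ^ a * t₂ ^ b * t₃ ^ a * (m:ℂ) * (if b = a then (m:ℂ) else 0) :=
          Finset.sum_congr rfl fun b _ => hc b
      _ = t₁ ^ a * t₂ ^ a * t₃ ^ a * (m:ℂ) * (m:ℂ) := by
          rw [Finset.sum_eq_single_of_mem a ha (fun b _ hba => by simp [hba])]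
          simp
      _ = (m:ℂ) ^ 2 * (t₁ * t₂ * t₃) ^ a := by rw [mul_pow, mul_pow]; ring
  -- step 4: assemble
  have step1 : (∑ i ∈ range m, ∑ j ∈ range m,
      ((1 - t₁ * ζ ^ i) * (1 - t₂ * ζ ^ j) * (1 - t₃ * ζ ^ (-(i:ℤ) - j)))⁻¹)
      = ((m:ℂ) ^ 2 * ∑ a ∈ range m, (t₁ * t₂ * t₃) ^ a) *
          ((1 - t₁ ^ m)⁻¹ * (1 - t₂ ^ m)⁻¹ * (1 - t₃ ^ m)⁻¹) := by
    calc (∑ i ∈ range m, ∑ j ∈ range m,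
        ((1 - t₁ * ζ ^ i) * (1 - t₂ * ζ ^ j) * (1 - t₃ * ζ ^ (-(i:ℤ) - j)))⁻¹)
        = ∑ i ∈ range m, ∑ j ∈ range m,
            (∑ a ∈ range m, ∑ b ∈ range m, ∑ c ∈ range m,
              t₁ ^ a * t₂ ^ b * t₃ ^ c * (ζ ^ ((a:ℤ) - c)) ^ i * (ζ ^ ((b:ℤ) - c)) ^ j)
            * ((1 - t₁ ^ m)⁻¹ * (1 - t₂ ^ m)⁻¹ * (1 - t₃ ^ m)⁻¹) :=
          Finset.sum_congr rfl fun i hi => Finset.sum_congr rfl fun j hj => hterm i hi j hj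
      _ = (∑ i ∈ range m, ∑ j ∈ range m, ∑ a ∈ range m, ∑ b ∈ range m, ∑ c ∈ range m,
              t₁ ^ a * t₂ ^ b * t₃ ^ c * (ζ ^ ((a:ℤ) - c)) ^ i * (ζ ^ ((b:ℤ) - c)) ^ j)
            * ((1 - t₁ ^ m)⁻¹ * (1 - t₂ ^ m)⁻¹ * (1 - t₃ ^ m)⁻¹) := by
          refine Eq.trans (Finset.sum_congr rfl fun i _ => (Finset.sum_mul _ _ _).symm) ?_
          exact (Finset.sum_mul _ _ _).symm
      _ = (∑ a ∈ range m, ∑ b ∈ range m, ∑ c ∈ range m,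
            t₁ ^ a * t₂ ^ b * t₃ ^ c * (if a = c then (m:ℂ) else 0) * (if b = c then (m:ℂ) else 0))
            * ((1 - t₁ ^ m)⁻¹ * (1 - t₂ ^ m)⁻¹ * (1 - t₃ ^ m)⁻¹) := by
          rw [hswap]
          refine congrArg (· * _) ?_
          refine Finset.sum_congr rfl fun a ha => Finset.sum_congr rfl fun b hb => ?_
          exact Finset.sum_congr rfl fun c hc => hin a b c ha hc hb
      _ = _ := by rw [hcol]
  rw [step1]
  -- final arithmetic
  have hgeo : (1 - t₁ * t₂ * t₃) * ∑ a ∈ range m, (t₁ * t₂ * t₃) ^ a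
      = 1 - (t₁ * t₂ * t₃) ^ m := by
    have := geom_sum_mul (t₁ * t₂ * t₃) m
    linear_combination -this
  have hmC : (m:ℂ) ≠ 0 := Nat.cast_ne_zero.mpr hm0
  have hSval : ∑ a ∈ range m, (t₁ * t₂ * t₃) ^ a = (1 - (t₁ * t₂ * t₃) ^ m) / (1 - t₁ * t₂ * t₃) := by
    field_simp
    linear_combination hgeo
  rw [hSval]
  field_simp
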